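/- For an odd prime p, in R = F_p[x]/(x^p − 1) with ψ(x) = ((1−x)^{p−1} − (1 + x + ⋯ + x^{p−1}))/p as above, one has (ψ(x) + x^{(p−1)/2})·(1−x)^{p−2} = 0 in R. -/

import Mathlib

open Polynomial

theorem stmt8 (p : ℕ) (hp : p.Prime) (hodd : Odd p) (q : Polynomial ℤ)
    (hq : C (p : ℤ) * q = (1 - X) ^ (p - 1) - ∑ i ∈ Finset.range p, X ^ i) :
    (Ideal.Quotient.mk (Ideal.span {(X : Polynomial (ZMod p)) ^ p - 1}))
      ((q.map (Int.castRingHom (ZMod p)) + X ^ ((p - 1) / 2)) * (1 - X) ^ (p - 2)) = 0 := by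
  haveI := Fact.mk hp
  have hp2 : p ≠ 2 := by rintro rfl; simp [Nat.odd_iff] at hodd
  have hp3 : 3 ≤ p := by have := hp.two_le; omega
  set m := (p - 1) / 2 with hm
  have hpne : (p : ℤ) ≠ 0 := by exact_mod_cast hp.ne_zero
  -- eval at 1
  have h1 : q.eval 1 = -1 := by
    have h := congrArg (eval 1) hq
    simp [eval_pow, zero_pow (by omega : p - 1 ≠ 0)] at h
    have : (p : ℤ) * q.eval 1 = (p : ℤ) * (-1) := by rw [h]; ring
    exact mul_left_cancel₀ hpne this
  -- derivative eval at 1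
  have h2 : (derivative q).eval 1 = -(m : ℤ) := by
    have h := congrArg (fun f => eval 1 (derivative f)) hq
    simp only [derivative_mul, derivative_C, zero_mul, zero_add, derivative_sub,
      derivative_pow, derivative_sum, derivative_X_pow, derivative_one, derivative_X,
      ] at h
    simp [eval_pow, zero_pow (by omega : p - 1 - 1 ≠ 0), eval_finset_sum] at h
    obtain ⟨k, hk⟩ := hodd
    have hsum : (∑ i ∈ Finset.range p, (i : ℤ)) = (p : ℤ) * m := by
      have h2 : (∑ i ∈ Finset.range p, i) * 2 = p * (p - 1) := Finset.sum_range_id_mul_two p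
      have hmk : m = k := by omega
      have h3 : (∑ i ∈ Finset.range p, i) * 2 = (p * k) * 2 := by
        rw [h2, show p - 1 = 2 * k by omega]; ring
      have hnat : (∑ i ∈ Finset.range p, i) = p * m := by
        rw [hmk]; omega
      have := congrArg (Nat.cast (R := ℤ)) hnat
      push_cast at this
      exact this
    rw [hsum] at h
    have : (p : ℤ) * (derivative q).eval 1 = (p : ℤ) * (-(m : ℤ)) := by rw [h]; ring
    exact mul_left_cancel₀ hpne this
  -- divisibility over ℤ
  have hdvd : (X - C (1 : ℤ)) ^ 2 ∣ q + X ^ m := by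
    rcases eq_or_ne (q + X ^ m) 0 with h0 | h0
    · rw [h0]; exact dvd_zero _
    · rw [← Polynomial.le_rootMultiplicity_iff h0]
      have : 1 < (q + X ^ m).rootMultiplicity 1 := by
        rw [Polynomial.one_lt_rootMultiplicity_iff_isRoot h0]
        constructor
        · simp [IsRoot, h1]
        · simp [IsRoot, derivative_add, derivative_X_pow, h2]
      omega
  obtain ⟨h, hh⟩ := hdvd
  -- pass to ZMod p
  rw [Ideal.Quotient.eq_zero_iff_mem, Ideal.mem_span_singleton]
  have hmap : q.map (Int.castRingHom (ZMod p)) + X ^ m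
      = (X - 1) ^ 2 * h.map (Int.castRingHom (ZMod p)) := by
    have := congrArg (map (Int.castRingHom (ZMod p))) hh
    simpa [Polynomial.map_add, Polynomial.map_pow, Polynomial.map_mul, Polynomial.map_sub]
      using this
  rw [hmap]
  have hpow : ((X : Polynomial (ZMod p)) - 1) ^ 2 * (1 - X) ^ (p - 2) = 1 - X ^ p := by
    have : ((X : Polynomial (ZMod p)) - 1) ^ 2 = (1 - X) ^ 2 := by ring
    rw [this, ← pow_add]
    rw [(by omega : 2 + (p - 2) = p)]
    rw [sub_pow_char (x := (1 : Polynomial (ZMod p))) (y := X), one_pow]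
  refine ⟨-(h.map (Int.castRingHom (ZMod p))), ?_⟩
  have : (X - 1) ^ 2 * h.map (Int.castRingHom (ZMod p)) * (1 - X) ^ (p - 2)
      = ((X - 1) ^ 2 * (1 - X) ^ (p - 2)) * h.map (Int.castRingHom (ZMod p)) := by ring
  rw [this, hpow]
  ring
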